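/- Equivalence of ensembles for local functions. Let f: {0,1}^ℤ → ℝ be a local function with support contained in {1,…,m}. Then lim_{ℓ→∞} max_{0 ≤ k ≤ ℓ} | ∫ f dν_{k,ℓ} − f̄(k/ℓ) | = 0, where for ℓ ≥ m the function f is regarded as a function on {0,1}^{{1,…,ℓ}}. -/

import Mathlib

noncomputable section

/-- Extension of a configuration on `{1,…,ℓ}` (coded by `Fin ℓ`) to `{0,1}^ℤ`,
by filling with `0` outside of `{1,…,ℓ}`. -/
def extCfg (ℓ : ℕ) (ξ : Fin ℓ → Bool) : ℤ → Bool :=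
  fun z => if h : 1 ≤ z ∧ z ≤ (ℓ : ℤ) then ξ ⟨(z - 1).toNat, by omega⟩ else false

/-- The expectation `∫ f dν_{k,ℓ}` of `f` under the uniform measure on
configurations of `{0,1}^{{1,…,ℓ}}` with exactly `k` particles. -/
def canonicalExp (ℓ k : ℕ) (f : (ℤ → Bool) → ℝ) : ℝ :=
  ((Finset.univ.filter
      (fun ξ : Fin ℓ → Bool => (∑ x : Fin ℓ, (if ξ x then 1 else 0)) = k)).card : ℝ)⁻¹ *
    ∑ ξ ∈ Finset.univ.filter
        (fun ξ : Fin ℓ → Bool => (∑ x : Fin ℓ, (if ξ x then 1 else 0)) = k),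
      f (extCfg ℓ ξ)

/-- `f̄(θ)`: the expectation of a local function `f` with support in `{1,…,m}`
when the coordinates are i.i.d. Bernoulli(θ). -/
def bernExp (m : ℕ) (f : (ℤ → Bool) → ℝ) (θ : ℝ) : ℝ :=
  ∑ ζ : Fin m → Bool, (∏ j : Fin m, (if ζ j then θ else 1 - θ)) * f (extCfg m ζ)

open Finset

/-! ### Auxiliary counting lemmas -/

def cnt {n : ℕ} (ξ : Fin n → Bool) : ℕ := ∑ x, if ξ x then 1 else 0

lemma cnt_eq_card {n : ℕ} (ξ : Fin n → Bool) :
    cnt ξ = (Finset.univ.filter fun x => ξ x = true).card := by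
  rw [Finset.card_filter]
  simp [cnt]

lemma cnt_le {n : ℕ} (ξ : Fin n → Bool) : cnt ξ ≤ n := by
  rw [cnt_eq_card]
  simpa using Finset.card_filter_le Finset.univ (fun x => ξ x = true)

lemma card_cnt_eq (n k : ℕ) :
    (Finset.univ.filter fun ξ : Fin n → Bool => cnt ξ = k).card = n.choose k := by
  have h : (Finset.powersetCard k (Finset.univ : Finset (Fin n))).card = n.choose k := by
    simp [Finset.card_powersetCard]
  rw [← h]
  refine Finset.card_bij' (fun ξ _ => Finset.univ.filter fun x => ξ x = true)
    (fun s _ => fun x => decide (x ∈ s)) ?_ ?_ ?_ ?_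
  · intro ξ hξ
    simp only [Finset.mem_filter, Finset.mem_univ, true_and] at hξ
    rw [Finset.mem_powersetCard]
    exact ⟨Finset.subset_univ _, by rw [← cnt_eq_card]; exact hξ⟩
  · intro s hs
    rw [Finset.mem_powersetCard] at hs
    simp only [Finset.mem_filter, Finset.mem_univ, true_and]
    rw [cnt_eq_card, ← hs.2]
    congr 1
    ext x
    simp
  · intro ξ hξ
    funext x
    simp
  · intro s hs
    ext x
    simp

/-! ### Splitting a configuration into its first `m` coordinates and the rest -/

def idxEquiv (m ℓ : ℕ) (hm : m ≤ ℓ) : (Fin m ⊕ Fin (ℓ - m)) ≃ Fin ℓ where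
  toFun := Sum.elim (Fin.castLE hm) (fun i => ⟨m + i, by omega⟩)
  invFun x := if h : (x : ℕ) < m then Sum.inl ⟨x, h⟩ else Sum.inr ⟨(x : ℕ) - m, by omega⟩
  left_inv p := by
    rcases p with i | i
    · simp [Fin.castLE, i.isLt]
    · have : ¬ (m + (i : ℕ) < m) := by omega
      simp only [Sum.elim_inr, this, dif_neg, not_false_iff]
      refine (dif_neg this).trans ?_
      congr 1
      ext
      simp
  right_inv x := by
    by_cases h : (x : ℕ) < m
    · simp only [h, dif_pos]
      rfl
    · simp only [h, dif_neg, not_false_iff, Sum.elim_inr]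
      ext
      simp
      omega

def cfgEquiv (m ℓ : ℕ) (hm : m ≤ ℓ) :
    ((Fin m → Bool) × (Fin (ℓ - m) → Bool)) ≃ (Fin ℓ → Bool) where
  toFun p := fun x => Sum.elim p.1 p.2 ((idxEquiv m ℓ hm).symm x)
  invFun ξ := (fun i => ξ ((idxEquiv m ℓ hm) (Sum.inl i)), fun i => ξ ((idxEquiv m ℓ hm) (Sum.inr i)))
  left_inv p := by
    ext i <;> simp
  right_inv ξ := by
    funext x
    obtain h := Equiv.apply_symm_apply (idxEquiv m ℓ hm) x
    dsimp only
    rcases hs : (idxEquiv m ℓ hm).symm x with i | i <;> rw [hs] at h <;>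
      simp only [Sum.elim_inl, Sum.elim_inr] <;> rw [h]

lemma cfgEquiv_apply_castLE (m ℓ : ℕ) (hm : m ≤ ℓ)
    (p : (Fin m → Bool) × (Fin (ℓ - m) → Bool)) (i : Fin m) :
    cfgEquiv m ℓ hm p (Fin.castLE hm i) = p.1 i := by
  have : (idxEquiv m ℓ hm).symm (Fin.castLE hm i) = Sum.inl i :=
    (idxEquiv m ℓ hm).symm_apply_eq.mpr rfl
  simp [cfgEquiv, this]

lemma cnt_cfgEquiv (m ℓ : ℕ) (hm : m ≤ ℓ) (p : (Fin m → Bool) × (Fin (ℓ - m) → Bool)) :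
    cnt (cfgEquiv m ℓ hm p) = cnt p.1 + cnt p.2 := by
  unfold cnt
  rw [← Equiv.sum_comp (idxEquiv m ℓ hm)
    (fun x => if cfgEquiv m ℓ hm p x then 1 else 0), Fintype.sum_sum_type]
  congr 1
  · apply Finset.sum_congr rfl
    intro i _
    have : (idxEquiv m ℓ hm).symm ((idxEquiv m ℓ hm) (Sum.inl i)) = Sum.inl i :=
      Equiv.symm_apply_apply _ _
    simp [cfgEquiv, this]
  · apply Finset.sum_congr rfl
    intro i _
    have : (idxEquiv m ℓ hm).symm ((idxEquiv m ℓ hm) (Sum.inr i)) = Sum.inr i :=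
      Equiv.symm_apply_apply _ _
    simp [cfgEquiv, this]

lemma extCfg_eq (m ℓ : ℕ) (hm : m ≤ ℓ) (p : (Fin m → Bool) × (Fin (ℓ - m) → Bool))
    (z : ℤ) (h1 : 1 ≤ z) (h2 : z ≤ (m : ℤ)) :
    extCfg ℓ (cfgEquiv m ℓ hm p) z = extCfg m p.1 z := by
  have hml : (m : ℤ) ≤ (ℓ : ℤ) := by exact_mod_cast hm
  have hzl : z ≤ (ℓ : ℤ) := le_trans h2 hml
  unfold extCfg
  rw [dif_pos ⟨h1, hzl⟩, dif_pos ⟨h1, h2⟩]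
  have hlt : (z - 1).toNat < m := by omega
  have heq : (⟨(z - 1).toNat, by omega⟩ : Fin ℓ) = Fin.castLE hm ⟨(z - 1).toNat, hlt⟩ := by
    ext
    simp [Fin.castLE]
  rw [heq, cfgEquiv_apply_castLE]

/-! ### Decomposition of the canonical ensemble sum -/

lemma canonical_sum (m ℓ k : ℕ) (hm : m ≤ ℓ) (f : (ℤ → Bool) → ℝ)
    (hfloc : ∀ ξ ζ : ℤ → Bool, (∀ z : ℤ, 1 ≤ z → z ≤ (m : ℤ) → ξ z = ζ z) → f ξ = f ζ) :
    ∑ ξ ∈ Finset.univ.filter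
        (fun ξ : Fin ℓ → Bool => (∑ x : Fin ℓ, (if ξ x then 1 else 0)) = k),
      f (extCfg ℓ ξ)
    = ∑ ζ : Fin m → Bool,
        (if cnt ζ ≤ k then ((ℓ - m).choose (k - cnt ζ) : ℝ) else 0) * f (extCfg m ζ) := by
  show ∑ ξ ∈ Finset.univ.filter (fun ξ : Fin ℓ → Bool => cnt ξ = k), f (extCfg ℓ ξ) = _
  rw [Finset.sum_filter]
  rw [← Equiv.sum_comp (cfgEquiv m ℓ hm)
    (fun ξ => if cnt ξ = k then f (extCfg ℓ ξ) else 0)]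
  rw [Fintype.sum_prod_type]
  apply Finset.sum_congr rfl
  intro ζ _
  have hf : ∀ η : Fin (ℓ - m) → Bool,
      f (extCfg ℓ (cfgEquiv m ℓ hm (ζ, η))) = f (extCfg m ζ) := by
    intro η
    exact hfloc _ _ (fun z hz1 hz2 => extCfg_eq m ℓ hm (ζ, η) z hz1 hz2)
  by_cases hjk : cnt ζ ≤ k
  · have hterm : ∀ η : Fin (ℓ - m) → Bool,
        (if cnt (cfgEquiv m ℓ hm (ζ, η)) = k then f (extCfg ℓ (cfgEquiv m ℓ hm (ζ, η))) else 0)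
          = (if cnt η = k - cnt ζ then f (extCfg m ζ) else 0) := by
      intro η
      rw [hf η]
      exact if_congr (by rw [cnt_cfgEquiv]; dsimp only; omega) rfl rfl
    rw [Finset.sum_congr rfl (fun η _ => hterm η), ← Finset.sum_filter,
      Finset.sum_const, card_cnt_eq, if_pos hjk, nsmul_eq_mul]
  · rw [if_neg hjk, zero_mul]
    apply Finset.sum_eq_zero
    intro η _
    rw [if_neg]
    rw [cnt_cfgEquiv]
    dsimp only
    omega

/-! ### Analytic lemmas -/

lemma prod_diff_bound (a b : ℕ → ℝ) (n : ℕ)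
    (ha : ∀ i < n, a i ∈ Set.Icc (0:ℝ) 1) (hb : ∀ i < n, b i ∈ Set.Icc (0:ℝ) 1) :
    |(∏ i ∈ range n, a i) - ∏ i ∈ range n, b i| ≤ ∑ i ∈ range n, |a i - b i| := by
  induction n with
  | zero => simp
  | succ n ih =>
    have ha' : ∀ i < n, a i ∈ Set.Icc (0:ℝ) 1 := fun i hi => ha i (by omega)
    have hb' : ∀ i < n, b i ∈ Set.Icc (0:ℝ) 1 := fun i hi => hb i (by omega)
    have hBn : (∏ i ∈ range n, b i) ∈ Set.Icc (0:ℝ) 1 := by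
      constructor
      · exact Finset.prod_nonneg fun i hi => (hb' i (Finset.mem_range.mp hi)).1
      · exact Finset.prod_le_one (fun i hi => (hb' i (Finset.mem_range.mp hi)).1)
          (fun i hi => (hb' i (Finset.mem_range.mp hi)).2)
    have han := ha n (by omega)
    rw [prod_range_succ, prod_range_succ, sum_range_succ]
    have key : (∏ i ∈ range n, a i) * a n - (∏ i ∈ range n, b i) * b n
        = ((∏ i ∈ range n, a i) - (∏ i ∈ range n, b i)) * a n
          + (∏ i ∈ range n, b i) * (a n - b n) := by ring
    rw [key]
    calc |((∏ i ∈ range n, a i) - (∏ i ∈ range n, b i)) * a n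
          + (∏ i ∈ range n, b i) * (a n - b n)|
        ≤ |((∏ i ∈ range n, a i) - (∏ i ∈ range n, b i)) * a n|
          + |(∏ i ∈ range n, b i) * (a n - b n)| := abs_add_le _ _
      _ ≤ |(∏ i ∈ range n, a i) - (∏ i ∈ range n, b i)| * 1 + 1 * |a n - b n| := by
          rw [abs_mul, abs_mul]
          gcongr
          · rw [abs_of_nonneg han.1]; exact han.2
          · rw [abs_of_nonneg hBn.1]; exact hBn.2
      _ ≤ (∑ i ∈ range n, |a i - b i|) + |a n - b n| := by
          rw [mul_one, one_mul]
          exact add_le_add_left (ih ha' hb') _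

lemma ratio_eq (m j k ℓ : ℕ) (hjk : j ≤ k) (hkl : k ≤ ℓ) (hml : m ≤ ℓ)
    (hkj : k - j ≤ ℓ - m) (hjm : j ≤ m) :
    ((ℓ - m).choose (k - j) : ℝ) / (ℓ.choose k : ℝ)
      = (k.descFactorial j : ℝ) * ((ℓ - k).descFactorial (m - j) : ℝ)
        / (ℓ.descFactorial m : ℝ) := by
  have hmj : m - j ≤ ℓ - k := by omega
  have f0 : ∀ n : ℕ, ((n.factorial : ℝ)) ≠ 0 := fun n => by
    exact_mod_cast (Nat.factorial_pos n).ne'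
  have Dm : (ℓ.descFactorial m : ℝ) = (ℓ.factorial : ℝ) / ((ℓ - m).factorial : ℝ) := by
    rw [eq_div_iff (f0 _), mul_comm]
    exact_mod_cast Nat.factorial_mul_descFactorial hml
  have Dk : (k.descFactorial j : ℝ) = (k.factorial : ℝ) / ((k - j).factorial : ℝ) := by
    rw [eq_div_iff (f0 _), mul_comm]
    exact_mod_cast Nat.factorial_mul_descFactorial hjk
  have Dlk : ((ℓ - k).descFactorial (m - j) : ℝ)
      = ((ℓ - k).factorial : ℝ) / ((ℓ - k - (m - j)).factorial : ℝ) := by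
    rw [eq_div_iff (f0 _), mul_comm]
    exact_mod_cast Nat.factorial_mul_descFactorial hmj
  rw [Nat.cast_choose ℝ hkj, Nat.cast_choose ℝ hkl, Dm, Dk, Dlk,
    show ℓ - m - (k - j) = ℓ - k - (m - j) by omega]
  have h1 := f0 (ℓ - m); have h2 := f0 (k - j); have h3 := f0 (ℓ - k - (m - j))
  have h4 := f0 ℓ; have h5 := f0 k; have h6 := f0 (ℓ - k)
  field_simp

lemma desc_prod (n r : ℕ) (hrn : r ≤ n) :
    (n.descFactorial r : ℝ) = ∏ i ∈ range r, ((n : ℝ) - i) := by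
  rw [Nat.descFactorial_eq_prod_range]
  push_cast [Nat.cast_prod]
  apply Finset.prod_congr rfl
  intro i hi
  rw [Finset.mem_range] at hi
  rw [Nat.cast_sub (by omega)]

lemma ratio_prod (m j k ℓ : ℕ) (hjk : j ≤ k) (hkl : k ≤ ℓ) (hml : m ≤ ℓ)
    (hkj : k - j ≤ ℓ - m) (hjm : j ≤ m) :
    ((ℓ - m).choose (k - j) : ℝ) / (ℓ.choose k : ℝ)
      = ∏ i ∈ range m,
          ((if i < j then (k : ℝ) - i else (ℓ : ℝ) - k - ((i : ℝ) - j)) / ((ℓ : ℝ) - i)) := by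
  rw [ratio_eq m j k ℓ hjk hkl hml hkj hjm, Finset.prod_div_distrib]
  rw [desc_prod ℓ m hml, desc_prod k j hjk, desc_prod (ℓ - k) (m - j) (by omega)]
  congr 1
  conv_rhs => rw [show m = j + (m - j) by omega, prod_range_add]
  congr 1
  · apply Finset.prod_congr rfl
    intro i hi
    rw [Finset.mem_range] at hi
    rw [if_pos (by omega)]
  · apply Finset.prod_congr rfl
    intro i hi
    rw [Finset.mem_range] at hi
    rw [if_neg (by omega)]
    push_cast [Nat.cast_sub hkl]
    ring

lemma factor_mem (m j k ℓ : ℕ) (i : ℕ) (him : i < m) (hjk : j ≤ k) (hkl : k ≤ ℓ)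
    (hml : m ≤ ℓ) (hkj : k - j ≤ ℓ - m) (hjm : j ≤ m) :
    ((if i < j then (k : ℝ) - i else (ℓ : ℝ) - k - ((i : ℝ) - j)) / ((ℓ : ℝ) - i))
      ∈ Set.Icc (0:ℝ) 1 := by
  have hil : i < ℓ := by omega
  have hL : (0:ℝ) < (ℓ : ℝ) - i := by
    have : (i:ℝ) < (ℓ:ℝ) := by exact_mod_cast hil
    linarith
  by_cases h : i < j
  · rw [if_pos h]
    have h1 : (i:ℝ) ≤ (k:ℝ) := by exact_mod_cast (by omega : i ≤ k)
    have h2 : (k:ℝ) ≤ (ℓ:ℝ) := by exact_mod_cast hkl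
    constructor
    · apply div_nonneg <;> linarith
    · rw [div_le_one hL]; linarith
  · rw [if_neg h]
    have hij : j ≤ i := by omega
    have h1 : (j:ℝ) ≤ (i:ℝ) := by exact_mod_cast hij
    have h2 : (j:ℝ) ≤ (k:ℝ) := by exact_mod_cast hjk
    have h3 : (k:ℝ) ≤ (ℓ:ℝ) := by exact_mod_cast hkl
    have h4 : (i:ℝ) - (j:ℝ) ≤ (ℓ:ℝ) - (k:ℝ) := by
      have hn : i - j ≤ ℓ - k := by omega
      have := (Nat.cast_le (α := ℝ)).mpr hn
      rw [Nat.cast_sub hij, Nat.cast_sub hkl] at this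
      linarith
    constructor
    · apply div_nonneg <;> linarith
    · rw [div_le_one hL]; linarith

lemma factor_bound (m j k ℓ : ℕ) (i : ℕ) (him : i < m) (hjk : j ≤ k) (hkl : k ≤ ℓ)
    (hml : m < ℓ) (hkj : k - j ≤ ℓ - m) (hjm : j ≤ m) :
    |((if i < j then (k : ℝ) - i else (ℓ : ℝ) - k - ((i : ℝ) - j)) / ((ℓ : ℝ) - i))
      - (if i < j then (k : ℝ) / ℓ else 1 - (k : ℝ) / ℓ)|
      ≤ 2 * m / ((ℓ : ℝ) - m) := by
  have hI : (i:ℝ) < (m:ℝ) := by exact_mod_cast him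
  have hM : (m:ℝ) < (ℓ:ℝ) := by exact_mod_cast hml
  have hK : (k:ℝ) ≤ (ℓ:ℝ) := by exact_mod_cast hkl
  have hK0 : (0:ℝ) ≤ (k:ℝ) := by positivity
  have hI0 : (0:ℝ) ≤ (i:ℝ) := by positivity
  have hJ0 : (0:ℝ) ≤ (j:ℝ) := by positivity
  have hL0 : (0:ℝ) < (ℓ:ℝ) := by linarith [hI0]
  have hLI : (0:ℝ) < (ℓ:ℝ) - i := by linarith
  have hLM : (0:ℝ) < (ℓ:ℝ) - m := by linarith
  have hden : ((ℓ:ℝ) - m) * ℓ ≤ |((ℓ:ℝ) - i) * ℓ| := by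
    rw [abs_of_pos (by positivity)]
    nlinarith
  by_cases h : i < j
  · rw [if_pos h, if_pos h]
    have hJ : (j:ℝ) ≤ (k:ℝ) := by exact_mod_cast hjk
    have key : ((k:ℝ) - i) / ((ℓ:ℝ) - i) - (k:ℝ) / ℓ
        = ((i:ℝ) * ((k:ℝ) - ℓ)) / (((ℓ:ℝ) - i) * ℓ) := by
      field_simp
      ring
    rw [key, abs_div]
    have hnum : |(i:ℝ) * ((k:ℝ) - ℓ)| ≤ 2 * m * ℓ := by
      rw [abs_mul, abs_of_nonneg hI0, abs_of_nonpos (by linarith)]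
      nlinarith
    calc |(i:ℝ) * ((k:ℝ) - ℓ)| / |((ℓ:ℝ) - i) * ℓ|
        ≤ (2 * m * ℓ) / (((ℓ:ℝ) - m) * ℓ) := by
          apply div_le_div₀ (by positivity) hnum (by positivity) hden
      _ = 2 * m / ((ℓ:ℝ) - m) := by rw [mul_div_mul_right _ _ (ne_of_gt hL0)]
  · rw [if_neg h, if_neg h]
    have hij : (j:ℝ) ≤ (i:ℝ) := by exact_mod_cast (by omega : j ≤ i)
    have key : ((ℓ:ℝ) - k - ((i:ℝ) - j)) / ((ℓ:ℝ) - i) - (1 - (k:ℝ) / ℓ)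
        = (((ℓ:ℝ) - k) * i - ((i:ℝ) - j) * ℓ) / (((ℓ:ℝ) - i) * ℓ) := by
      field_simp
      ring
    rw [key, abs_div]
    have hnum : |((ℓ:ℝ) - k) * i - ((i:ℝ) - j) * ℓ| ≤ 2 * m * ℓ := by
      rw [abs_le]
      constructor <;> nlinarith
    calc |((ℓ:ℝ) - k) * i - ((i:ℝ) - j) * ℓ| / |((ℓ:ℝ) - i) * ℓ|
        ≤ (2 * m * ℓ) / (((ℓ:ℝ) - m) * ℓ) := by
          apply div_le_div₀ (by positivity) hnum (by positivity) hden
      _ = 2 * m / ((ℓ:ℝ) - m) := by rw [mul_div_mul_right _ _ (ne_of_gt hL0)]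

lemma pow_split (θ : ℝ) (m j : ℕ) (hjm : j ≤ m) :
    θ ^ j * (1 - θ) ^ (m - j) = ∏ i ∈ range m, (if i < j then θ else 1 - θ) := by
  conv_rhs => rw [show m = j + (m - j) by omega, prod_range_add]
  congr 1
  · rw [Finset.prod_congr rfl (fun i hi => if_pos (Finset.mem_range.mp hi)),
      Finset.prod_const, Finset.card_range]
  · rw [Finset.prod_congr rfl (fun i _ => if_neg (by omega)),
      Finset.prod_const, Finset.card_range]

lemma key_bound (m j k ℓ : ℕ) (hjm : j ≤ m) (hkl : k ≤ ℓ) (hml : m < ℓ) :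
    |(if j ≤ k then ((ℓ - m).choose (k - j) : ℝ) else 0) / (ℓ.choose k : ℝ)
      - ((k:ℝ)/ℓ) ^ j * (1 - (k:ℝ)/ℓ) ^ (m - j)| ≤ 2 * m ^ 2 / ((ℓ:ℝ) - m) := by
  have hM : (m:ℝ) < (ℓ:ℝ) := by exact_mod_cast hml
  have hL0 : (0:ℝ) < (ℓ:ℝ) := by
    have : (0:ℝ) ≤ (m:ℝ) := by positivity
    linarith
  have hLM : (0:ℝ) < (ℓ:ℝ) - m := by linarith
  have hK : (k:ℝ) ≤ (ℓ:ℝ) := by exact_mod_cast hkl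
  have hθ0 : (0:ℝ) ≤ (k:ℝ)/ℓ := by positivity
  have hθ1 : (k:ℝ)/ℓ ≤ 1 := by rw [div_le_one hL0]; exact hK
  have h1θ0 : (0:ℝ) ≤ 1 - (k:ℝ)/ℓ := by linarith
  have h1θ1 : 1 - (k:ℝ)/ℓ ≤ 1 := by linarith
  have hP0 : (0:ℝ) ≤ ((k:ℝ)/ℓ) ^ j * (1 - (k:ℝ)/ℓ) ^ (m - j) :=
    mul_nonneg (pow_nonneg hθ0 _) (pow_nonneg h1θ0 _)
  have tail : ∀ _ : 1 ≤ m, (m:ℝ) / ((ℓ:ℝ) - m) ≤ 2 * m ^ 2 / ((ℓ:ℝ) - m) := by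
    intro hm1
    have h1m : (1:ℝ) ≤ (m:ℝ) := by exact_mod_cast hm1
    gcongr
    nlinarith
  by_cases hjk : j ≤ k
  · by_cases hkj : k - j ≤ ℓ - m
    · rw [if_pos hjk, ratio_prod m j k ℓ hjk hkl (le_of_lt hml) hkj hjm,
        pow_split ((k:ℝ)/ℓ) m j hjm]
      calc |(∏ i ∈ range m, ((if i < j then (k : ℝ) - i else (ℓ : ℝ) - k - ((i : ℝ) - j)) / ((ℓ : ℝ) - i)))
            - ∏ i ∈ range m, (if i < j then (k:ℝ)/ℓ else 1 - (k:ℝ)/ℓ)|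
          ≤ ∑ i ∈ range m, |((if i < j then (k : ℝ) - i else (ℓ : ℝ) - k - ((i : ℝ) - j)) / ((ℓ : ℝ) - i))
              - (if i < j then (k:ℝ)/ℓ else 1 - (k:ℝ)/ℓ)| := by
            apply prod_diff_bound
            · intro i hi; exact factor_mem m j k ℓ i hi hjk hkl (le_of_lt hml) hkj hjm
            · intro i hi
              by_cases h : i < j
              · rw [if_pos h]; exact ⟨hθ0, hθ1⟩
              · rw [if_neg h]; exact ⟨h1θ0, h1θ1⟩
        _ ≤ ∑ _i ∈ range m, 2 * (m:ℝ) / ((ℓ:ℝ) - m) := by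
            apply Finset.sum_le_sum
            intro i hi
            exact factor_bound m j k ℓ i (Finset.mem_range.mp hi) hjk hkl hml hkj hjm
        _ = 2 * m ^ 2 / ((ℓ:ℝ) - m) := by
            rw [Finset.sum_const, Finset.card_range, nsmul_eq_mul]
            field_simp
    · have hc : (ℓ - m).choose (k - j) = 0 := Nat.choose_eq_zero_of_lt (by omega)
      have hmj1 : 1 ≤ m - j := by omega
      rw [if_pos hjk, hc]
      rw [Nat.cast_zero, zero_div, zero_sub, abs_neg, abs_of_nonneg hP0]
      have h1 : ((k:ℝ)/ℓ) ^ j ≤ 1 := pow_le_one₀ hθ0 hθ1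
      have h2 : (1 - (k:ℝ)/ℓ) ^ (m - j) ≤ (1 - (k:ℝ)/ℓ) ^ 1 :=
        pow_le_pow_of_le_one h1θ0 h1θ1 hmj1
      have h3 : 1 - (k:ℝ)/ℓ ≤ (m:ℝ)/ℓ := by
        have hn : ℓ ≤ k + m := by omega
        have hr : (ℓ:ℝ) ≤ (k:ℝ) + m := by exact_mod_cast hn
        rw [sub_le_iff_le_add, ← add_div, le_div_iff₀ hL0]
        linarith
      calc ((k:ℝ)/ℓ) ^ j * (1 - (k:ℝ)/ℓ) ^ (m - j)
          ≤ 1 * (1 - (k:ℝ)/ℓ) ^ 1 := by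
            apply mul_le_mul h1 h2 (pow_nonneg h1θ0 _) zero_le_one
        _ = 1 - (k:ℝ)/ℓ := by ring
        _ ≤ (m:ℝ)/ℓ := h3
        _ ≤ (m:ℝ)/((ℓ:ℝ) - m) := by
            gcongr
            linarith
        _ ≤ 2 * m ^ 2 / ((ℓ:ℝ) - m) := tail (by omega)
  · have hj1 : 1 ≤ j := by omega
    rw [if_neg hjk, zero_div, zero_sub, abs_neg, abs_of_nonneg hP0]
    have h1 : ((k:ℝ)/ℓ) ^ j ≤ ((k:ℝ)/ℓ) ^ 1 := pow_le_pow_of_le_one hθ0 hθ1 hj1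
    have h2 : (1 - (k:ℝ)/ℓ) ^ (m - j) ≤ 1 := pow_le_one₀ h1θ0 h1θ1
    have h3 : (k:ℝ)/ℓ ≤ (m:ℝ)/ℓ := by
      gcongr
      exact_mod_cast (by omega : k ≤ m)
    calc ((k:ℝ)/ℓ) ^ j * (1 - (k:ℝ)/ℓ) ^ (m - j)
        ≤ ((k:ℝ)/ℓ) ^ 1 * 1 := mul_le_mul h1 h2 (pow_nonneg h1θ0 _) (by positivity)
      _ = (k:ℝ)/ℓ := by ring
      _ ≤ (m:ℝ)/ℓ := h3
      _ ≤ (m:ℝ)/((ℓ:ℝ) - m) := by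
          gcongr
          linarith
      _ ≤ 2 * m ^ 2 / ((ℓ:ℝ) - m) := tail (by omega)

/-! ### The main estimate -/

lemma main_est (m ℓ k : ℕ) (hml : m < ℓ) (hk : k ≤ ℓ) (f : (ℤ → Bool) → ℝ)
    (hfloc : ∀ ξ ζ : ℤ → Bool, (∀ z : ℤ, 1 ≤ z → z ≤ (m : ℤ) → ξ z = ζ z) → f ξ = f ζ) :
    |canonicalExp ℓ k f - bernExp m f ((k : ℝ) / (ℓ : ℝ))|
      ≤ 2 * (m:ℝ) ^ 2 / ((ℓ:ℝ) - m) * ∑ ζ : Fin m → Bool, |f (extCfg m ζ)| := by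
  have hm : m ≤ ℓ := le_of_lt hml
  set θ := (k:ℝ)/(ℓ:ℝ) with hθdef
  have hcan : canonicalExp ℓ k f = ∑ ζ : Fin m → Bool,
      ((if cnt ζ ≤ k then ((ℓ - m).choose (k - cnt ζ) : ℝ) else 0) / (ℓ.choose k : ℝ))
        * f (extCfg m ζ) := by
    unfold canonicalExp
    rw [canonical_sum m ℓ k hm f hfloc,
      show (Finset.univ.filter
        (fun ξ : Fin ℓ → Bool => (∑ x : Fin ℓ, (if ξ x then 1 else 0)) = k)).card
          = ℓ.choose k from card_cnt_eq ℓ k,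
      Finset.mul_sum]
    apply Finset.sum_congr rfl
    intro ζ _
    ring
  have hbern : bernExp m f θ = ∑ ζ : Fin m → Bool,
      (θ ^ cnt ζ * (1 - θ) ^ (m - cnt ζ)) * f (extCfg m ζ) := by
    unfold bernExp
    apply Finset.sum_congr rfl
    intro ζ _
    congr 1
    rw [Finset.prod_ite (fun _ => θ) (fun _ => 1 - θ), Finset.prod_const, Finset.prod_const]
    have h1 : (Finset.univ.filter (fun x : Fin m => ζ x = true)).card = cnt ζ :=
      (cnt_eq_card ζ).symm
    have htot := Finset.card_filter_add_card_filter_not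
      (s := (Finset.univ : Finset (Fin m))) (p := fun x => ζ x = true)
    rw [Finset.card_univ, Fintype.card_fin] at htot
    have hcle := cnt_le ζ
    rw [h1, show (Finset.univ.filter (fun x : Fin m => ¬ ζ x = true)).card = m - cnt ζ by omega]
  rw [hcan, hbern, ← Finset.sum_sub_distrib]
  calc |∑ ζ : Fin m → Bool,
        (((if cnt ζ ≤ k then ((ℓ - m).choose (k - cnt ζ) : ℝ) else 0) / (ℓ.choose k : ℝ))
            * f (extCfg m ζ)
          - (θ ^ cnt ζ * (1 - θ) ^ (m - cnt ζ)) * f (extCfg m ζ))|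
      ≤ ∑ ζ : Fin m → Bool,
          |((if cnt ζ ≤ k then ((ℓ - m).choose (k - cnt ζ) : ℝ) else 0) / (ℓ.choose k : ℝ)
            - θ ^ cnt ζ * (1 - θ) ^ (m - cnt ζ))| * |f (extCfg m ζ)| := by
        refine le_trans (Finset.abs_sum_le_sum_abs _ _) ?_
        apply Finset.sum_le_sum
        intro ζ _
        rw [show ((if cnt ζ ≤ k then ((ℓ - m).choose (k - cnt ζ) : ℝ) else 0) / (ℓ.choose k : ℝ))
              * f (extCfg m ζ) - (θ ^ cnt ζ * (1 - θ) ^ (m - cnt ζ)) * f (extCfg m ζ)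
            = ((if cnt ζ ≤ k then ((ℓ - m).choose (k - cnt ζ) : ℝ) else 0) / (ℓ.choose k : ℝ)
              - θ ^ cnt ζ * (1 - θ) ^ (m - cnt ζ)) * f (extCfg m ζ) from by ring, abs_mul]
    _ ≤ ∑ ζ : Fin m → Bool, (2 * (m:ℝ) ^ 2 / ((ℓ:ℝ) - m)) * |f (extCfg m ζ)| := by
        apply Finset.sum_le_sum
        intro ζ _
        apply mul_le_mul_of_nonneg_right _ (abs_nonneg _)
        exact key_bound m (cnt ζ) k ℓ (cnt_le ζ) hk hml
    _ = 2 * (m:ℝ) ^ 2 / ((ℓ:ℝ) - m) * ∑ ζ : Fin m → Bool, |f (extCfg m ζ)| := by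
        rw [Finset.mul_sum]

/-- **Equivalence of ensembles for local functions.** If
`f : {0,1}^ℤ → ℝ` is local with support contained in `{1,…,m}`, then
`lim_{ℓ→∞} max_{0 ≤ k ≤ ℓ} |∫ f dν_{k,ℓ} − f̄(k/ℓ)| = 0`. -/
theorem equivalence_of_ensembles (m : ℕ) (f : (ℤ → Bool) → ℝ)
    (hfloc : ∀ ξ ζ : ℤ → Bool, (∀ k : ℤ, 1 ≤ k → k ≤ (m : ℤ) → ξ k = ζ k) → f ξ = f ζ) :
    Filter.Tendsto (fun ℓ : ℕ =>
        (Finset.range (ℓ + 1)).sup' Finset.nonempty_range_add_one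
          (fun k => |canonicalExp ℓ k f - bernExp m f ((k : ℝ) / (ℓ : ℝ))|))
      Filter.atTop (nhds 0) := by
  set M := ∑ ζ : Fin m → Bool, |f (extCfg m ζ)| with hMdef
  have hM0 : 0 ≤ M := Finset.sum_nonneg fun ζ _ => abs_nonneg _
  apply squeeze_zero' (g := fun ℓ : ℕ => 2 * (m:ℝ) ^ 2 / ((ℓ:ℝ) - m) * M)
  · apply Filter.Eventually.of_forall
    intro ℓ
    have h0 : (0:ℕ) ∈ Finset.range (ℓ + 1) := by simp
    exact le_trans (abs_nonneg _)
      (Finset.le_sup' (fun k => |canonicalExp ℓ k f - bernExp m f ((k : ℝ) / (ℓ : ℝ))|) h0)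
  · rw [Filter.eventually_atTop]
    refine ⟨m + 1, fun ℓ hℓ => ?_⟩
    apply Finset.sup'_le
    intro k hk
    rw [Finset.mem_range] at hk
    exact main_est m ℓ k (by omega) (by omega) f hfloc
  · have h1 : Filter.Tendsto (fun ℓ : ℕ => (ℓ:ℝ) + (-(m:ℝ))) Filter.atTop Filter.atTop :=
      Filter.tendsto_atTop_add_const_right _ _ tendsto_natCast_atTop_atTop
    have h2 := h1.inv_tendsto_atTop
    have h3 := h2.const_mul (2 * (m:ℝ) ^ 2 * M)
    rw [mul_zero] at h3
    have heq : (fun ℓ : ℕ => 2 * (m:ℝ) ^ 2 / ((ℓ:ℝ) - m) * M)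
        = fun ℓ : ℕ => (2 * (m:ℝ) ^ 2 * M) * ((ℓ:ℝ) + (-(m:ℝ)))⁻¹ := by
      funext ℓ
      rw [div_eq_mul_inv, sub_eq_add_neg]
      ring
    rw [heq]
    exact h3

end
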